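/- The direct sum ⊕_{i ≥ 2} ℤ/iℤ (over all integers i ≥ 2) of cyclic groups of order i is not linear: for every field K and every natural number n there is no injective group homomorphism from ⊕_{i ≥ 2} ℤ/iℤ into GL_n(K). -/

import Mathlib

set_option synthInstance.maxHeartbeats 1000000
set_option maxHeartbeats 2000000

open Multiplicative

private def myIdx (j : ℕ) : {i : ℕ // 2 ≤ i} :=
  ⟨2 ^ (j + 1), by
    calc 2 = 2 ^ 1 := rfl
    _ ≤ 2 ^ (j + 1) := Nat.pow_le_pow_right (by norm_num) (by omega)⟩

private lemma myIdx_inj : Function.Injective myIdx := by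
  intro a b h
  have : (2:ℕ) ^ (a+1) = 2 ^ (b+1) := congrArg Subtype.val h
  have := Nat.pow_right_injective (le_refl 2) this
  omega

/-- the generator `2^j mod 2^(j+1)`, an element of order 2 in `ZMod (2^(j+1))`. -/
private def myG (j : ℕ) : Π₀ i : {i : ℕ // 2 ≤ i}, ZMod i.1 :=
  DFinsupp.single (myIdx j) (((2:ℕ) ^ j : ℕ) : ZMod (2 ^ (j + 1)))

private lemma myVal_ne_zero (j : ℕ) : (((2:ℕ) ^ j : ℕ) : ZMod (2 ^ (j + 1))) ≠ 0 := by
  haveI : NeZero ((2:ℕ) ^ (j+1)) := ⟨(Nat.pow_pos (by norm_num)).ne'⟩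
  intro h
  rw [ZMod.natCast_eq_zero_iff] at h
  replace h := h
  have h1 := Nat.le_of_dvd (Nat.pow_pos (by norm_num)) h
  have h2 : (2:ℕ) ^ j < 2 ^ (j+1) := Nat.pow_lt_pow_right (by norm_num) (by omega)
  omega

private lemma myG_add_self (j : ℕ) : myG j + myG j = 0 := by
  unfold myG
  change DFinsupp.single (β := fun i : {i : ℕ // 2 ≤ i} => ZMod i.1) (myIdx j)
    (((2:ℕ) ^ j : ℕ) : ZMod (myIdx j).1) +
    DFinsupp.single (β := fun i : {i : ℕ // 2 ≤ i} => ZMod i.1) (myIdx j) (((2:ℕ) ^ j : ℕ) : ZMod (myIdx j).1) = 0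
  rw [← DFinsupp.single_add]
  convert DFinsupp.single_zero (myIdx j)
  · rfl
  rw [← Nat.cast_add]
  have : (2:ℕ)^j + 2^j = 2^(j+1) := by ring
  rw [this]; exact ZMod.natCast_self _

private lemma myG_sum_add_self (S : Finset ℕ) :
    (∑ j ∈ S, myG j) + ∑ j ∈ S, myG j = 0 := by
  rw [← Finset.sum_add_distrib]
  exact Finset.sum_eq_zero fun j _ => myG_add_self j

private lemma myG_sum_apply (S : Finset ℕ) (j0 : ℕ) (h : j0 ∈ S) :
    (∑ j ∈ S, myG j) (myIdx j0) = (((2:ℕ) ^ j0 : ℕ) : ZMod (2 ^ (j0 + 1))) := by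
  rw [DFinsupp.finset_sum_apply]
  rw [Finset.sum_eq_single_of_mem j0 h]
  · exact DFinsupp.single_eq_same
  · intro j _ hne
    exact DFinsupp.single_eq_of_ne (fun hc => hne (myIdx_inj hc.symm))

private lemma myG_sum_apply_not (S : Finset ℕ) (j0 : ℕ) (h : j0 ∉ S) :
    (∑ j ∈ S, myG j) (myIdx j0) = 0 := by
  rw [DFinsupp.finset_sum_apply]
  exact Finset.sum_eq_zero fun j hj =>
    DFinsupp.single_eq_of_ne (fun hc => h ((myIdx_inj hc) ▸ hj))

private lemma myG_sum_inj : Function.Injective (fun S : Finset ℕ => ∑ j ∈ S, myG j) := by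
  intro S T hST
  by_contra hne
  rcases Finset.not_subset.mp (fun hsub => hne (Finset.Subset.antisymm hsub (by
      by_contra hTS
      rcases Finset.not_subset.mp hTS with ⟨j0, hj0T, hj0S⟩
      have h1 := congrFun (congrArg DFunLike.coe hST) (myIdx j0)
      rw [myG_sum_apply_not S j0 hj0S, myG_sum_apply T j0 hj0T] at h1
      exact myVal_ne_zero j0 h1.symm))) with ⟨j0, hj0S, hj0T⟩
  have h1 := congrFun (congrArg DFunLike.coe hST) (myIdx j0)
  rw [myG_sum_apply S j0 hj0S, myG_sum_apply_not T j0 hj0T] at h1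
  exact myVal_ne_zero j0 h1

/-- The direct sum `⊕_{i ≥ 2} ℤ/iℤ` of the cyclic groups of all orders `i ≥ 2`
is not linear: for every field `K` and every `n`, there is no injective group
homomorphism from it into `GL n K`. -/
theorem stmt_6 (K : Type) [Field K] (n : ℕ) :
    ¬ ∃ f : Multiplicative (Π₀ i : {i : ℕ // 2 ≤ i}, ZMod i.1) →* GL (Fin n) K,
      Function.Injective f := by
  rintro ⟨f, hf⟩
  -- dispose of n = 0
  rcases Nat.eq_zero_or_pos n with hn | hn
  · subst hn
    have h01 : f (ofAdd (myG 0)) = f 1 := Units.ext (Subsingleton.elim _ _)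
    have := hf h01
    rw [ofAdd_eq_one] at this
    have h0 := congrFun (congrArg DFunLike.coe this) (myIdx 0)
    rw [show (myG 0) (myIdx 0) = (((2:ℕ)^0 : ℕ) : ZMod (2^(0+1))) from DFinsupp.single_eq_same] at h0
    exact myVal_ne_zero 0 h0
  haveI : Nonempty (Fin n) := ⟨⟨0, hn⟩⟩
  by_cases hK2 : (2 : K) = 0
  · -- characteristic 2 : use an element of order 2^(n+1), unipotent bound
    have hchar : ringChar K = 2 := by
      have hdvd : ringChar K ∣ 2 := (ringChar.spec K 2).mp (by exact_mod_cast hK2)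
      rcases (Nat.dvd_prime Nat.prime_two).mp hdvd with h | h
      · exfalso
        have := (ringChar.spec K 1).mpr (h ▸ dvd_refl _)
        simp at this
      · exact h
    haveI : CharP K 2 := hchar ▸ ringChar.charP K
    haveI : CharP (Matrix (Fin n) (Fin n) K) 2 := Matrix.charP 2
    set g' : Π₀ i : {i : ℕ // 2 ≤ i}, ZMod i.1 :=
      DFinsupp.single (myIdx n) (1 : ZMod (2 ^ (n + 1))) with hg'
    have hord : orderOf (f (ofAdd g')) = 2 ^ (n + 1) := by
      rw [orderOf_injective f hf, orderOf_ofAdd_eq_addOrderOf, hg']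
      rw [show (DFinsupp.single (myIdx n) (1 : ZMod (2 ^ (n + 1)))) =
        DFinsupp.singleAddHom (fun i : {i : ℕ // 2 ≤ i} => ZMod i.1) (myIdx n)
          (1 : ZMod (myIdx n).1) from rfl]
      rw [addOrderOf_injective (DFinsupp.singleAddHom (fun i : {i : ℕ // 2 ≤ i} => ZMod i.1) (myIdx n))
        (DFinsupp.single_injective (β := fun i : {i : ℕ // 2 ≤ i} => ZMod i.1))]
      exact ZMod.addOrderOf_one _
    set m0 : Matrix (Fin n) (Fin n) K :=
      ((f (ofAdd g') : GL (Fin n) K) : Matrix (Fin n) (Fin n) K) with hm0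
    have hMpow : m0 ^ 2 ^ (n + 1) = 1 := by
      have := pow_orderOf_eq_one (f (ofAdd g'))
      rw [hord] at this
      calc m0 ^ 2 ^ (n+1) = ((f (ofAdd g') ^ 2 ^ (n+1) : GL (Fin n) K) : Matrix (Fin n) (Fin n) K) := by
            rw [Units.val_pow_eq_pow_val]
      _ = 1 := by rw [this]; rfl
    have hnil : IsNilpotent (m0 - 1) := ⟨2 ^ (n + 1), by
      rw [sub_pow_char_pow_of_commute _ _ (Commute.one_right m0), hMpow, one_pow, sub_self]⟩
    have hcp : (m0 - 1) ^ n = 0 := by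
      have h1 : (m0 - 1).charpoly = Polynomial.X ^ n := by
        have h2 := Matrix.isNilpotent_charpoly_sub_pow_of_isNilpotent hnil
        rw [Fintype.card_fin] at h2
        have := h2.eq_zero
        rwa [sub_eq_zero] at this
      have h3 := Matrix.aeval_self_charpoly (m0 - 1)
      rw [h1] at h3
      simpa using h3
    have hpow : m0 ^ 2 ^ n = 1 := by
      have h4 : (m0 - 1) ^ 2 ^ n = 0 :=
        pow_eq_zero_of_le (Nat.le_of_lt (Nat.lt_two_pow_self (n := n))) hcp
      rw [sub_pow_char_pow_of_commute _ _ (Commute.one_right m0), one_pow, sub_eq_zero] at h4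
      exact h4
    have hu : f (ofAdd g') ^ 2 ^ n = 1 := by
      apply Units.ext
      rw [Units.val_pow_eq_pow_val]
      exact hpow
    have hdvd := orderOf_dvd_of_pow_eq_one hu
    rw [hord] at hdvd
    have hle := Nat.le_of_dvd (Nat.pow_pos (by norm_num)) hdvd
    have : (2:ℕ) ^ n < 2 ^ (n + 1) := Nat.pow_lt_pow_right (by norm_num) (by omega)
    omega
  · -- characteristic ≠ 2 : infinitely many commuting involutions
    set y : Finset ℕ → Matrix (Fin n) (Fin n) K :=
      fun S => ((f (ofAdd (∑ j ∈ S, myG j)) : GL (Fin n) K) : Matrix (Fin n) (Fin n) K) with hy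
    have hy_mul : ∀ S T, y S * y T =
        ((f (ofAdd ((∑ j ∈ S, myG j) + ∑ j ∈ T, myG j)) : GL (Fin n) K) :
          Matrix (Fin n) (Fin n) K) := by
      intro S T
      rw [hy]
      rw [← Units.val_mul, ← map_mul]
      rfl
    have hy_comm : ∀ a ∈ Set.range y, ∀ b ∈ Set.range y, a * b = b * a := by
      rintro a ⟨S, rfl⟩ b ⟨T, rfl⟩
      rw [hy_mul, hy_mul, add_comm]
    set A : Subalgebra K (Matrix (Fin n) (Fin n) K) := Algebra.adjoin K (Set.range y) with hA
    letI : CommRing ↥A := Algebra.adjoinCommRingOfComm K hy_comm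
    haveI : IsArtinianRing ↥A := isArtinian_of_tower K isArtinian_of_fg_of_artinian'
    set a : Finset ℕ → ↥A := fun S => ⟨y S, Algebra.subset_adjoin ⟨S, rfl⟩⟩ with ha
    have ha_mul_one : ∀ S T, a S * a T = 1 ↔ S = T := by
      intro S T
      constructor
      · intro h
        have hval : y S * y T = 1 := congrArg Subtype.val h
        rw [hy_mul] at hval
        have : f (ofAdd ((∑ j ∈ S, myG j) + ∑ j ∈ T, myG j)) = 1 := Units.ext hval
        have h0 := hf (this.trans (map_one f).symm)
        rw [ofAdd_eq_one] at h0
        apply myG_sum_inj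
        have hT := myG_sum_add_self T
        calc (∑ j ∈ S, myG j) = (∑ j ∈ S, myG j) + ((∑ j ∈ T, myG j) + ∑ j ∈ T, myG j) := by
              rw [hT, add_zero]
        _ = ((∑ j ∈ S, myG j) + ∑ j ∈ T, myG j) + ∑ j ∈ T, myG j := by rw [add_assoc]
        _ = ∑ j ∈ T, myG j := by rw [h0, zero_add]
      · rintro rfl
        apply Subtype.ext
        show y S * y S = 1
        rw [hy_mul, myG_sum_add_self]
        show ((f 1 : GL (Fin n) K) : Matrix (Fin n) (Fin n) K) = 1
        rw [map_one]
        rfl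
    have ha_sq : ∀ S, a S * a S = 1 := fun S => (ha_mul_one S S).mpr rfl
    -- invertibility of 2 in A
    letI i2K : Invertible (2 : K) := invertibleOfNonzero hK2
    letI i2A : Invertible (2 : ↥A) := by
      have h := i2K.map (algebraMap K ↥A)
      rwa [map_ofNat] at h
    -- key separation lemma
    have key : ∀ S T : Finset ℕ, S ≠ T → ∃ p : Ideal ↥A, ∃ hp : p.IsPrime,
        ¬ (Ideal.Quotient.mk p (a S) = 1 ↔ Ideal.Quotient.mk p (a T) = 1) := by
      intro S T hST
      set z : ↥A := a S * a T with hz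
      have hz2 : z * z = 1 := by
        rw [hz]
        have : a S * a T * (a S * a T) = (a S * a S) * (a T * a T) := by ring
        rw [this, ha_sq, ha_sq, one_mul]
      have hz1 : z ≠ 1 := fun hc => hST ((ha_mul_one S T).mp hc)
      set e : ↥A := ⅟(2 : ↥A) * (1 - z) with he
      have h1z : (1 - z) * (1 - z) = 2 * (1 - z) := by linear_combination hz2
      have he_idem : e * e = e := by
        have h2 : ⅟(2 : ↥A) * 2 = 1 := invOf_mul_self 2
        calc e * e = ⅟(2:↥A) * ⅟(2:↥A) * ((1 - z) * (1 - z)) := by rw [he]; ring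
        _ = ⅟(2:↥A) * ⅟(2:↥A) * (2 * (1 - z)) := by rw [h1z]
        _ = (⅟(2:↥A) * 2) * (⅟(2:↥A) * (1 - z)) := by ring
        _ = e := by rw [h2, one_mul, he]
      have he_ne : e ≠ 0 := by
        intro hc
        apply hz1
        have : (1 : ↥A) - z = 2 * e := by rw [he, ← mul_assoc, mul_invOf_self, one_mul]
        rw [hc, mul_zero, sub_eq_zero] at this
        exact this.symm
      have he_notnil : ¬ IsNilpotent e := by
        rintro ⟨k, hk⟩
        have hpow : ∀ m : ℕ, e ^ (m + 1) = e := by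
          intro m
          induction m with
          | zero => rw [pow_one]
          | succ m ih => rw [pow_succ, ih, he_idem]
        rcases k with _ | m
        · rw [pow_zero] at hk
          exact he_ne (by rw [← mul_one e, hk, mul_zero])
        · rw [hpow m] at hk
          exact he_ne hk
      have hex : ∃ p : Ideal ↥A, p.IsPrime ∧ e ∉ p := by
        by_contra hc
        push_neg at hc
        exact he_notnil (nilpotent_iff_mem_prime.mpr (fun J hJ => hc J hJ))
      rcases hex with ⟨p, hp, hep⟩
      refine ⟨p, hp, ?_⟩
      haveI := hp
      set π := Ideal.Quotient.mk p with hπ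
      have hπz : π z = -1 := by
        have hsq : π z * π z = 1 := by rw [← map_mul, hz2, map_one]
        rcases mul_self_eq_one_iff.mp hsq with h | h
        · exfalso
          apply hep
          rw [← Ideal.Quotient.eq_zero_iff_mem, ← hπ]
          have : π e = π (⅟(2:↥A)) * (1 - π z) := by rw [he, map_mul, map_sub, map_one]
          rw [this, h, sub_self, mul_zero]
        · exact h
      have h2q : (2 : ↥A ⧸ p) ≠ 0 := by
        intro hc
        have h1 : π ((2 : ↥A) * ⅟(2:↥A)) = 1 := by rw [mul_invOf_self, map_one]
        rw [map_mul] at h1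
        have h2 : π (2 : ↥A) = (2 : ↥A ⧸ p) := map_ofNat _ _
        rw [h2, hc, zero_mul] at h1
        exact zero_ne_one h1
      have hneg : (-1 : ↥A ⧸ p) ≠ 1 := by
        intro hc
        apply h2q
        linear_combination -hc
      have hSsq : π (a S) * π (a S) = 1 := by rw [← map_mul, ha_sq, map_one]
      have hTsq : π (a T) * π (a T) = 1 := by rw [← map_mul, ha_sq, map_one]
      have hzval : π (a S) * π (a T) = -1 := by rw [← map_mul, ← hz, hπz]
      intro hiff
      rcases mul_self_eq_one_iff.mp hSsq with hS1 | hS1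
      · have hT1 := hiff.mp hS1
        apply h2q
        linear_combination hzval - (π (a T)) * hS1 - hT1
      · rcases mul_self_eq_one_iff.mp hTsq with hT1 | hT1
        · have h := hiff.mpr hT1
          rw [h] at hS1
          exact hneg hS1.symm
        · apply h2q
          linear_combination hzval - (π (a T)) * hS1 + hT1
    -- finiteness of the prime spectrum gives the contradiction
    haveI hfinp : Finite {p : Ideal ↥A // p.IsPrime} :=
      (IsArtinianRing.setOfPred_isPrime_finite ↥A).to_subtype
    classical
    set Φ : Finset ℕ → ({p : Ideal ↥A // p.IsPrime} → Bool) :=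
      fun S q => decide (Ideal.Quotient.mk q.1 (a S) = 1) with hΦ
    have hΦinj : Function.Injective Φ := by
      intro S T h
      by_contra hST
      rcases key S T hST with ⟨p, hp, hne⟩
      apply hne
      have := congrFun h ⟨p, hp⟩
      rw [hΦ] at this
      simpa using decide_eq_decide.mp this
    rcases Finite.exists_ne_map_eq_of_infinite Φ with ⟨S, T, hST, hEq⟩
    exact hST (hΦinj hEq)
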